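/- The flat rank (and hence the slice rank) of a diagonal tensor of size m is m: if t : [m] × [m] × [m] → F satisfies t(i,j,k) = δ_{ij}δ_{jk}·c_i with all c_i ≠ 0, then frank(t) = slicerank(t) = m. -/

import Mathlib

open Module

/-- A matrix whose entries factor as `a x * b y` has rank at most 1. -/
lemma rank_of_mul_le_one {K : Type*} [Field K] {X Y : Type*} [Fintype Y]
    (a : X → K) (b : Y → K) :
    (Matrix.of fun x y => a x * b y : Matrix X Y K).rank ≤ 1 := by
  have hrange : LinearMap.range (Matrix.of fun x y => a x * b y :
      Matrix X Y K).mulVecLin ≤ Submodule.span K {a} := by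
    rintro w ⟨u, rfl⟩
    have : (Matrix.of fun x y => a x * b y : Matrix X Y K).mulVecLin u
        = (∑ y, b y * u y) • a := by
      funext x
      simp [Matrix.mulVecLin_apply, Matrix.mulVec, dotProduct,
        Finset.mul_sum, Finset.sum_mul, mul_comm, mul_left_comm]
    rw [this]
    exact Submodule.smul_mem _ _ (Submodule.mem_span_singleton_self a)
  calc (Matrix.of fun x y => a x * b y : Matrix X Y K).rank
      ≤ finrank K (Submodule.span K ({a} : Set (X → K))) :=
        Submodule.finrank_mono hrange
    _ ≤ 1 := by
        classical
        simpa using finrank_span_le_card ({a} : Set (X → K))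

lemma matrix_rank_add_le {K : Type*} [Field K] {X Y : Type*} [Fintype Y]
    (A B : Matrix X Y K) : (A + B).rank ≤ A.rank + B.rank := by
  have h : LinearMap.range (A + B).mulVecLin ≤
      LinearMap.range A.mulVecLin ⊔ LinearMap.range B.mulVecLin := by
    rintro w ⟨u, rfl⟩
    rw [Matrix.mulVecLin_add]
    exact Submodule.add_mem_sup ⟨u, rfl⟩ ⟨u, rfl⟩
  calc (A + B).rank ≤ finrank K ↥(LinearMap.range A.mulVecLin ⊔ LinearMap.range B.mulVecLin) :=
        Submodule.finrank_mono h
    _ ≤ A.rank + B.rank := Submodule.finrank_add_le_finrank_add_finrank _ _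

lemma matrix_rank_sum_le {K : Type*} [Field K] {X Y : Type*} [Fintype Y]
    {ι : Type*} (s : Finset ι) (M : ι → Matrix X Y K) :
    (∑ i ∈ s, M i).rank ≤ ∑ i ∈ s, (M i).rank := by
  classical
  induction s using Finset.induction with
  | empty => simp
  | insert _ _ hx ih =>
    rw [Finset.sum_insert hx, Finset.sum_insert hx]
    exact (matrix_rank_add_le _ _).trans (Nat.add_le_add_left ih _)

/-- `HasSliceRankLE K F r` : the tensor `F` can be written as a sum of `r` slice terms. -/
def HasSliceRankLE {X Y Z : Type*} (K : Type*) [Field K]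
    (F : X → Y → Z → K) (r : ℕ) : Prop :=
  ∃ T : Fin r → (X → Y → Z → K),
    (∀ i, (∃ (f : X → K) (g : Y → Z → K), T i = fun x y z => f x * g y z) ∨
          (∃ (f : Y → K) (g : X → Z → K), T i = fun x y z => f y * g x z) ∨
          (∃ (f : Z → K) (g : X → Y → K), T i = fun x y z => f z * g x y)) ∧
    ∀ x y z, F x y z = ∑ i, T i x y z

/-- The slice rank of a 3-tensor. -/
noncomputable def sliceRank {X Y Z : Type*} (K : Type*) [Field K]
    (F : X → Y → Z → K) : ℕ :=
  sInf {r | HasSliceRankLE K F r}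

/-- Contraction of the third factor of a 3-tensor with a vector. -/
noncomputable def contractZ {K : Type*} [Field K] {X Y Z : Type*} [Fintype Z]
    (t : X → Y → Z → K) (v : Z → K) : Matrix X Y K :=
  Matrix.of fun x y => ∑ z, t x y z * v z

/-- `HasFlatRankLE K t ℓ` : there is a subspace `V` of the third factor, of
codimension `c`, with all contractions of `t` against vectors of `V` of matrix
rank at most `r`, and `r + c ≤ ℓ`. -/
def HasFlatRankLE {X Y Z : Type*} (K : Type*) [Field K]
    [Fintype X] [Fintype Y] [Fintype Z] (t : X → Y → Z → K) (ℓ : ℕ) : Prop :=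
  ∃ (V : Submodule K (Z → K)) (r : ℕ),
    (∀ v ∈ V, (contractZ t v).rank ≤ r) ∧
    r + (Fintype.card Z - Module.finrank K V) ≤ ℓ

/-- The flat rank of a 3-tensor. -/
noncomputable def flatRank {X Y Z : Type*} (K : Type*) [Field K]
    [Fintype X] [Fintype Y] [Fintype Z] (t : X → Y → Z → K) : ℕ :=
  sInf {ℓ | HasFlatRankLE K t ℓ}

/-- Flat rank is a lower bound for slice rank: any slice decomposition with `r`
terms gives a flat-rank witness of value at most `r`. -/
lemma hasFlatRankLE_of_hasSliceRankLE {K : Type*} [Field K] {X Y Z : Type*}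
    [Fintype X] [Fintype Y] [Fintype Z] (t : X → Y → Z → K) (r : ℕ)
    (h : HasSliceRankLE K t r) : HasFlatRankLE K t r := by
  classical
  obtain ⟨T, hT, hsum⟩ := h
  set S3 : Finset (Fin r) := Finset.univ.filter (fun i =>
    ¬ ((∃ (f : X → K) (g : Y → Z → K), T i = fun x y z => f x * g y z) ∨
       (∃ (f : Y → K) (g : X → Z → K), T i = fun x y z => f y * g x z))) with hS3
  have h3 : ∀ i : {i // i ∈ S3}, ∃ (f : Z → K) (g : X → Y → K),
      T i.1 = fun x y z => f z * g x y := by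
    rintro ⟨i, hi⟩
    rw [hS3, Finset.mem_filter] at hi
    rcases hT i with h1 | h2 | h3
    · exact absurd (Or.inl h1) hi.2
    · exact absurd (Or.inr h2) hi.2
    · exact h3
  choose f g hfg using h3
  let Φ : (Z → K) →ₗ[K] ({i // i ∈ S3} → K) :=
    { toFun := fun v i => ∑ z, f i z * v z
      map_add' := by
        intro u v; funext i
        simp [mul_add, Finset.sum_add_distrib]
      map_smul' := by
        intro a v; funext i
        simp [Finset.mul_sum, mul_comm, mul_left_comm] }
  refine ⟨LinearMap.ker Φ, S3ᶜ.card, ?_, ?_⟩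
  · intro v hv
    have hΦ : ∀ i : {i // i ∈ S3}, ∑ z, f i z * v z = 0 := by
      intro i
      have := (LinearMap.mem_ker.mp hv)
      exact congrFun this i
    have hdecomp : contractZ t v = ∑ i ∈ S3ᶜ, contractZ (T i) v := by
      have hall : contractZ t v = ∑ i : Fin r, contractZ (T i) v := by
        ext x y
        simp only [contractZ, Matrix.of_apply, Matrix.sum_apply, hsum, Finset.sum_mul]
        rw [Finset.sum_comm]
      rw [hall, ← Finset.sum_compl_add_sum S3 (fun i => contractZ (T i) v)]
      have hzero : ∀ i ∈ S3, contractZ (T i) v = 0 := by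
        intro i hi
        ext x y
        simp only [contractZ, Matrix.of_apply, hfg ⟨i, hi⟩, Matrix.zero_apply]
        calc ∑ z, f ⟨i, hi⟩ z * g ⟨i, hi⟩ x y * v z
            = g ⟨i, hi⟩ x y * ∑ z, f ⟨i, hi⟩ z * v z := by
              rw [Finset.mul_sum]; exact Finset.sum_congr rfl fun z _ => by ring
          _ = 0 := by rw [hΦ ⟨i, hi⟩, mul_zero]
      rw [Finset.sum_congr rfl hzero]
      simp
    rw [hdecomp]
    calc (∑ i ∈ S3ᶜ, contractZ (T i) v).rank
        ≤ ∑ i ∈ S3ᶜ, (contractZ (T i) v).rank := matrix_rank_sum_le _ _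
      _ ≤ ∑ _i ∈ S3ᶜ, 1 := by
          refine Finset.sum_le_sum fun i hi => ?_
          have hi' : i ∉ S3 := Finset.mem_compl.mp hi
          rw [hS3, Finset.mem_filter, not_and, not_not] at hi'
          rcases hi' (Finset.mem_univ i) with ⟨a, b, hab⟩ | ⟨a, b, hab⟩
          · have : contractZ (T i) v
                = Matrix.of fun x y => a x * (∑ z, b y z * v z) := by
              ext x y
              simp only [contractZ, Matrix.of_apply, hab, Finset.mul_sum]
              exact Finset.sum_congr rfl fun z _ => by ring
            rw [this]; exact rank_of_mul_le_one _ _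
          · have : contractZ (T i) v
                = Matrix.of fun x y => (∑ z, b x z * v z) * a y := by
              ext x y
              simp only [contractZ, Matrix.of_apply, hab, Finset.sum_mul]
              exact Finset.sum_congr rfl fun z _ => by ring
            rw [this]; exact rank_of_mul_le_one (fun x => ∑ z, b x z * v z) a
      _ = S3ᶜ.card := by simp
  · have hrn : finrank K (LinearMap.range Φ) + finrank K (LinearMap.ker Φ)
        = Fintype.card Z := by
      rw [LinearMap.finrank_range_add_finrank_ker]
      simp [finrank_pi]
    have hrange : finrank K (LinearMap.range Φ) ≤ S3.card := by
      calc finrank K (LinearMap.range Φ) ≤ finrank K ({i // i ∈ S3} → K) :=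
            (LinearMap.range Φ).finrank_le
        _ = S3.card := by simp [finrank_pi, Fintype.card_coe]
    have hcompl : S3ᶜ.card + S3.card = r := by
      rw [Finset.card_compl]
      have := Finset.card_le_univ S3
      simp only [Fintype.card_fin] at *
      omega
    omega

/-- The diagonal tensor. -/
lemma le_of_hasFlatRankLE_diagonal {K : Type*} [Field K] {m : ℕ}
    (c : Fin m → K) (hc : ∀ i, c i ≠ 0) (ℓ : ℕ)
    (h : HasFlatRankLE K (fun i j k : Fin m => if i = j ∧ j = k then c i else 0) ℓ) :
    m ≤ ℓ := by
  classical
  obtain ⟨V, r, hrank, hle⟩ := h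
  set d := finrank K V with hd
  have hdm : d ≤ m := by
    have := V.finrank_le
    simpa [finrank_pi] using this
  -- choose a vector of maximal support in V
  set A : Set ℕ := {n | ∃ v ∈ V, n = (Finset.univ.filter (fun i => v i ≠ 0)).card} with hA
  have hA0 : 0 ∈ A := ⟨0, V.zero_mem, by simp⟩
  have hbdd : BddAbove A := by
    refine ⟨m, ?_⟩
    rintro n ⟨v, hv, rfl⟩
    simpa using (Finset.card_filter_le Finset.univ (fun i => v i ≠ 0)).trans (by simp)
  obtain ⟨v, hvV, hvcard⟩ : sSup A ∈ A := Nat.sSup_mem ⟨0, hA0⟩ hbdd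
  set s := sSup A with hs
  -- any w ∈ V vanishing on the support of v is zero
  have hkill : ∀ w ∈ V, (∀ i, v i ≠ 0 → w i = 0) → w = 0 := by
    intro w hwV hw
    by_contra hw0
    have hsub : Finset.univ.filter (fun i => v i ≠ 0) ∪
        Finset.univ.filter (fun i => w i ≠ 0) ⊆
        Finset.univ.filter (fun i => (v + w) i ≠ 0) := by
      intro i hi
      rcases Finset.mem_union.mp hi with hi | hi
      · have hvi : v i ≠ 0 := (Finset.mem_filter.mp hi).2
        have hne : (v + w) i ≠ 0 := by
          show v i + w i ≠ 0
          rw [hw i hvi, add_zero]; exact hvi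
        exact Finset.mem_filter.mpr ⟨Finset.mem_univ i, hne⟩
      · have hwi : w i ≠ 0 := (Finset.mem_filter.mp hi).2
        have hvi : v i = 0 := by
          by_contra hvi; exact hwi (hw i hvi)
        have hne : (v + w) i ≠ 0 := by
          show v i + w i ≠ 0
          rw [hvi, zero_add]; exact hwi
        exact Finset.mem_filter.mpr ⟨Finset.mem_univ i, hne⟩
    have hdisj : Disjoint (Finset.univ.filter (fun i => v i ≠ 0))
        (Finset.univ.filter (fun i => w i ≠ 0)) := by
      rw [Finset.disjoint_left]
      intro i hi hiw
      exact (Finset.mem_filter.mp hiw).2 (hw i (Finset.mem_filter.mp hi).2)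
    have hcard := Finset.card_le_card hsub
    rw [Finset.card_union_of_disjoint hdisj, ← hvcard] at hcard
    have hmem : (Finset.univ.filter (fun i => (v + w) i ≠ 0)).card ∈ A :=
      ⟨v + w, V.add_mem hvV hwV, rfl⟩
    have hle' := le_csSup hbdd hmem
    have hwpos : 0 < (Finset.univ.filter (fun i => w i ≠ 0)).card := by
      rw [Finset.card_pos]
      obtain ⟨i, hi⟩ := Function.ne_iff.mp hw0
      exact ⟨i, Finset.mem_filter.mpr ⟨Finset.mem_univ i, hi⟩⟩
    omega
  -- d ≤ s via injective restriction map
  have hds : d ≤ s := by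
    let L : V →ₗ[K] ({i // v i ≠ 0} → K) :=
      { toFun := fun w i => w.1 i.1
        map_add' := by intro u w; rfl
        map_smul' := by intro a w; rfl }
    have hinj : Function.Injective L := by
      rw [← LinearMap.ker_eq_bot, LinearMap.ker_eq_bot']
      intro w hw
      have : (w : Fin m → K) = 0 := by
        refine hkill w w.2 fun i hi => ?_
        exact congrFun hw ⟨i, hi⟩
      exact Subtype.ext this
    have := LinearMap.finrank_le_finrank_of_injective hinj
    calc d ≤ finrank K ({i // v i ≠ 0} → K) := this
      _ = s := by
        rw [finrank_pi, hvcard]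
        simp [Fintype.card_subtype]
  -- contraction with v is a diagonal matrix of rank s
  have hdiag : contractZ (fun i j k : Fin m => if i = j ∧ j = k then c i else 0) v
      = Matrix.diagonal (fun i => c i * v i) := by
    ext x y
    by_cases hxy : x = y
    · subst hxy
      simp [contractZ, Matrix.diagonal, Finset.sum_ite_eq', eq_comm]
    · simp [contractZ, Matrix.diagonal, hxy]
  have hrankv : (contractZ (fun i j k : Fin m => if i = j ∧ j = k then c i else 0) v).rank
      = s := by
    rw [hdiag, Matrix.rank_diagonal, hvcard, Fintype.card_subtype]
    congr 1
    apply Finset.filter_congr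
    intro i _
    simp [mul_ne_zero_iff, hc i]
  have hsr : s ≤ r := by
    rw [← hrankv]; exact hrank v hvV
  have hcard : Fintype.card (Fin m) = m := Fintype.card_fin m
  omega

/-- A diagonal tensor of size `m` with nonzero diagonal entries has flat rank
and slice rank exactly `m`. -/
theorem flatRank_sliceRank_diagonal {K : Type*} [Field K] (m : ℕ)
    (c : Fin m → K) (hc : ∀ i, c i ≠ 0) :
    flatRank K (fun i j k : Fin m => if i = j ∧ j = k then c i else 0) = m ∧
    sliceRank K (fun i j k : Fin m => if i = j ∧ j = k then c i else 0) = m := by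
  classical
  set t := fun i j k : Fin m => if i = j ∧ j = k then c i else 0 with ht
  have hflat_m : HasFlatRankLE K t m := by
    refine ⟨⊥, 0, ?_, ?_⟩
    · intro v hv
      rw [Submodule.mem_bot] at hv; subst hv
      have h0 : contractZ t (0 : Fin m → K) = 0 := by
        ext x y; simp [contractZ]
      simp [h0]
    · simp [finrank_bot, Fintype.card_fin]
  have hslice_m : HasSliceRankLE K t m := by
    refine ⟨fun i x y z => (if x = i then (1 : K) else 0) *
        (if i = y ∧ y = z then c i else 0),
      fun i => Or.inl ⟨_, _, rfl⟩, ?_⟩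
    intro x y z
    simp only [ht, ite_mul, one_mul, zero_mul]
    rw [Finset.sum_ite_eq]
    simp
  constructor
  · refine le_antisymm (Nat.sInf_le hflat_m) ?_
    exact le_csInf ⟨m, hflat_m⟩ fun ℓ hℓ => le_of_hasFlatRankLE_diagonal c hc ℓ hℓ
  · refine le_antisymm (Nat.sInf_le hslice_m) ?_
    exact le_csInf ⟨m, hslice_m⟩ fun ℓ hℓ =>
      le_of_hasFlatRankLE_diagonal c hc ℓ (hasFlatRankLE_of_hasSliceRankLE t ℓ hℓ)
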